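/- Fix integers n, j, m ≥ 1 with j ≤ n, a composition (n_1,…,n_j) of n into j positive parts, a real α < 1, and real weights V(n,k) with V(n,j) ≠ 0. Let 1 ≤ l ≤ n+m and r ≥ 1, and for a tuple (m_1,…,m_j) set O_l = #{i ∈ {1,…,j} : n_i + m_i = l}. Then the r-th falling factorial moment of the number of old blocks of size l satisfies: ∑ (O_l)_{[r]}·J(m_1,…,m_j; s) = r!·∑_{{ξ_1,…,ξ_r}} [m!·∏_{i=1}^{r} (n_{ξ_i}−α)_{l−n_{ξ_i}}/(∏_{i=1}^{r} (l−n_{ξ_i})!·(m−rl+T)!)]·∑_{k=0}^{m−rl+T} (V(n+m,j+k)/V(n,j))·S(m−rl+T, k; α, −(n−(j−r)α−T)), where the left sum ranges over all tuples (m_1,…,m_j) of nonnegative integers and s ≥ 0 with ∑_{i=1}^{j} m_i + s = m, the right sum ranges over all r-element subsets {ξ_1,…,ξ_r} of {1,…,j} with n_{ξ_i} ≤ l for each i and ∑_{i=1}^{r}(l−n_{ξ_i}) ≤ m, and T = ∑_{i=1}^{r} n_{ξ_i}. -/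

import Mathlib

/-- Rising factorial `(x)_n = x(x+1)⋯(x+n−1)`. -/
noncomputable def risingFac (x : ℝ) (n : ℕ) : ℝ := ∏ i ∈ Finset.range n, (x + i)

/-- Rising factorial with increment `α`: `(x)_{n↑α} = ∏_{i<n} (x + iα)`. -/
noncomputable def risingFacInc (x α : ℝ) (n : ℕ) : ℝ := ∏ i ∈ Finset.range n, (x + i * α)

/-- Falling factorial `(x)_{[n]} = x(x−1)⋯(x−n+1)`. -/
noncomputable def fallingFac (x : ℝ) (n : ℕ) : ℝ := ∏ i ∈ Finset.range n, (x - i)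

/-- Compositions of `n` into `k` positive parts, as functions `Fin k → ℕ`. -/
def compositions (n k : ℕ) : Finset (Fin k → ℕ) :=
  (Fintype.piFinset fun _ => Finset.range (n + 1)).filter
    (fun f => (∀ i, 0 < f i) ∧ ∑ i, f i = n)

/-- Tuples of `k` nonnegative integers summing to `n`. -/
def weakCompositions (n k : ℕ) : Finset (Fin k → ℕ) :=
  (Fintype.piFinset fun _ => Finset.range (n + 1)).filter (fun f => ∑ i, f i = n)

/-- Generalized (central) Stirling number
`S(n,k;α) = (n!/k!) ∑_{(n_1,…,n_k)} ∏_j (1−α)_{n_j−1}/n_j!`,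
the sum over compositions of `n` into `k` positive parts. -/
noncomputable def genStirling (α : ℝ) (n k : ℕ) : ℝ :=
  (Nat.factorial n : ℝ) / (Nat.factorial k : ℝ) *
    ∑ f ∈ compositions n k, ∏ j, risingFac (1 - α) (f j - 1) / (Nat.factorial (f j) : ℝ)

/-- Non-central generalized Stirling number
`S(n,k;α,γ) = ∑_{s=k}^n C(n,s) S(s,k;α) (−γ)_{n−s}`. -/
noncomputable def genStirlingNC (α γ : ℝ) (n k : ℕ) : ℝ :=
  ∑ s ∈ Finset.Icc k n, (n.choose s : ℝ) * genStirling α s k * risingFac (-γ) (n - s)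

/-- The joint conditional distribution of old-block allocations
`J(m_1,…,m_j;s) = m!/(m_1!⋯m_j!·s!)·∏_i (n_i−α)_{m_i}·
∑_{k=0}^{s} (V(n+m,j+k)/V(n,j))·S(s,k;α)`. -/
noncomputable def oldJoint (α : ℝ) (V : ℕ → ℕ → ℝ) (n j m : ℕ) (nv : Fin j → ℕ)
    (mv : Fin j → ℕ) (s : ℕ) : ℝ :=
  (Nat.factorial m : ℝ) /
      ((∏ i, (Nat.factorial (mv i) : ℝ)) * (Nat.factorial s : ℝ)) *
    (∏ i, risingFac ((nv i : ℝ) - α) (mv i)) *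
    ∑ k ∈ Finset.range (s + 1), (V (n + m) (j + k) / V n j) * genStirling α s k


section AuxProofs
open Finset

lemma risingFac_zero (x : ℝ) : risingFac x 0 = 1 := by simp [risingFac]

lemma risingFac_succ (x : ℝ) (n : ℕ) : risingFac x (n+1) = risingFac x n * (x + n) := by
  simp [risingFac, Finset.prod_range_succ]

lemma risingFac_zero_left {n : ℕ} (hn : 1 ≤ n) : risingFac 0 n = 0 := by
  obtain ⟨k, rfl⟩ := Nat.exists_eq_add_of_le hn
  unfold risingFac
  refine Finset.prod_eq_zero (Finset.mem_range.mpr (by omega : 0 < 1 + k)) (by simp)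

lemma fallingFac_natCast (c r : ℕ) : fallingFac (c : ℝ) r = (c.descFactorial r : ℝ) := by
  induction r with
  | zero => simp [fallingFac]
  | succ r ih =>
    rw [fallingFac, Finset.prod_range_succ, ← fallingFac, ih, Nat.descFactorial_succ]
    rcases lt_trichotomy r c with h | h | h
    · push_cast [Nat.cast_sub h.le]; ring
    · subst h
      simp [Nat.descFactorial_eq_zero_iff_lt.mpr (Nat.lt_succ_self r)]
    · rw [Nat.descFactorial_eq_zero_iff_lt.mpr h]
      simp

lemma risingFac_add (x y : ℝ) (t : ℕ) :
    risingFac (x + y) t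
      = ∑ c ∈ Finset.range (t+1), (t.choose c : ℝ) * (risingFac x c * risingFac y (t - c)) := by
  induction t with
  | zero => simp [risingFac]
  | succ t ih =>
    rw [risingFac_succ, ih, Finset.sum_mul]
    have key : ∀ c ∈ Finset.range (t+1),
        (t.choose c : ℝ) * (risingFac x c * risingFac y (t - c)) * (x + y + t)
        = (t.choose c : ℝ) * (risingFac x (c+1) * risingFac y (t - c))
          + (t.choose c : ℝ) * (risingFac x c * risingFac y (t + 1 - c)) := by
      intro c hc
      rw [Finset.mem_range, Nat.lt_succ_iff] at hc
      have h2 : t + 1 - c = (t - c) + 1 := by omega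
      rw [risingFac_succ, h2, risingFac_succ]
      have h1 : (t : ℝ) = c + ((t - c : ℕ) : ℝ) := by
        rw [Nat.cast_sub hc]; ring
      rw [h1]; ring
    rw [Finset.sum_congr rfl key, Finset.sum_add_distrib]
    have e1 : ∑ c ∈ Finset.range (t+1),
        (t.choose c : ℝ) * (risingFac x (c+1) * risingFac y (t - c))
        = ∑ b ∈ Finset.range (t+2),
            (if b = 0 then 0 else (t.choose (b-1) : ℝ)) * (risingFac x b * risingFac y (t + 1 - b)) := by
      have h5 := Finset.sum_range_succ'
        (fun b => (if b = 0 then 0 else (t.choose (b-1) : ℝ)) *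
          (risingFac x b * risingFac y (t + 1 - b))) (t+1)
      rw [h5]
      norm_num
      refine (Finset.sum_congr rfl fun c hc => ?_)
      have h3 : t + 1 - (c + 1) = t - c := by omega
      simp [h3]
    have e2 : ∑ c ∈ Finset.range (t+1),
        (t.choose c : ℝ) * (risingFac x c * risingFac y (t + 1 - c))
        = ∑ b ∈ Finset.range (t+2),
            (t.choose b : ℝ) * (risingFac x b * risingFac y (t + 1 - b)) := by
      have h4 := Finset.sum_range_succ
        (fun b => (t.choose b : ℝ) * (risingFac x b * risingFac y (t + 1 - b))) (t+1)
      rw [h4]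
      simp [Nat.choose_succ_self]
    rw [e1, e2, ← Finset.sum_add_distrib]
    refine Finset.sum_congr rfl fun b hb => ?_
    rcases Nat.eq_zero_or_pos b with rfl | hbpos
    · simp
    · obtain ⟨b', rfl⟩ := Nat.exists_eq_add_of_le hbpos
      have : 1 + b' = b' + 1 := by omega
      rw [this]
      rw [if_neg (by omega)]
      have : (b' + 1) - 1 = b' := by omega
      rw [this, Nat.choose_succ_succ t b']
      push_cast; ring

lemma multinomial_risingFac {ι : Type*} [Fintype ι] [DecidableEq ι] (x : ι → ℝ) (M : ℕ)
    (τ : Finset ι) :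
    ∀ t : ℕ, t ≤ M →
    ∑ g ∈ (Fintype.piFinset fun _ : ι => Finset.range (M+1)).filter
        (fun g => (∀ i ∉ τ, g i = 0) ∧ ∑ i ∈ τ, g i = t),
      ((t.factorial : ℝ) / ∏ i ∈ τ, ((g i).factorial : ℝ)) * ∏ i ∈ τ, risingFac (x i) (g i)
    = risingFac (∑ i ∈ τ, x i) t := by
  induction τ using Finset.induction_on with
  | empty =>
    intro t ht
    simp only [Finset.sum_empty, Finset.prod_empty, Finset.notMem_empty]
    rcases Nat.eq_zero_or_pos t with rfl | htpos
    · have hset : (Fintype.piFinset fun _ : ι => Finset.range (M+1)).filter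
          (fun g => (∀ (i : ι), ¬False → g i = 0) ∧ (0:ℕ) = 0)
          = {fun _ => 0} := by
        ext g
        simp only [Finset.mem_filter, Fintype.mem_piFinset, Finset.mem_range,
          Finset.mem_singleton, funext_iff]
        constructor
        · rintro ⟨-, h, -⟩ i; exact h i (fun h => h.elim)
        · intro h; exact ⟨fun i => by simp [h i], fun i _ => h i, trivial⟩
      rw [hset]
      simp [risingFac_zero]
    · rw [risingFac_zero_left htpos, Finset.filter_false_of_mem, Finset.sum_empty]
      intro g _
      simp only [not_and]
      intro _
      omega
  | @insert a τ' ha ih =>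
    intro t ht
    have hmaps : ∀ g ∈ (Fintype.piFinset fun _ : ι => Finset.range (M+1)).filter
        (fun g => (∀ i ∉ insert a τ', g i = 0) ∧ ∑ i ∈ insert a τ', g i = t),
        g a ∈ Finset.range (t+1) := by
      intro g hg
      rw [Finset.mem_filter] at hg
      have h1 : g a ≤ ∑ i ∈ insert a τ', g i :=
        Finset.single_le_sum (fun i _ => Nat.zero_le _) (Finset.mem_insert_self a τ')
      rw [hg.2.2] at h1
      exact Finset.mem_range.mpr (by omega)
    rw [← Finset.sum_fiberwise_of_maps_to hmaps]
    have inner : ∀ c ∈ Finset.range (t+1),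
        ∑ g ∈ ((Fintype.piFinset fun _ : ι => Finset.range (M+1)).filter
            (fun g => (∀ i ∉ insert a τ', g i = 0) ∧ ∑ i ∈ insert a τ', g i = t)).filter
            (fun g => g a = c),
          ((t.factorial : ℝ) / ∏ i ∈ insert a τ', ((g i).factorial : ℝ)) *
            ∏ i ∈ insert a τ', risingFac (x i) (g i)
        = (t.choose c : ℝ) * (risingFac (x a) c * risingFac (∑ i ∈ τ', x i) (t - c)) := by
      intro c hc
      rw [Finset.mem_range, Nat.lt_succ_iff] at hc
      have step1 :
          ∑ g ∈ ((Fintype.piFinset fun _ : ι => Finset.range (M+1)).filter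
              (fun g => (∀ i ∉ insert a τ', g i = 0) ∧ ∑ i ∈ insert a τ', g i = t)).filter
              (fun g => g a = c),
            ((t.factorial : ℝ) / ∏ i ∈ insert a τ', ((g i).factorial : ℝ)) *
              ∏ i ∈ insert a τ', risingFac (x i) (g i)
          = ∑ g' ∈ (Fintype.piFinset fun _ : ι => Finset.range (M+1)).filter
              (fun g' => (∀ i ∉ τ', g' i = 0) ∧ ∑ i ∈ τ', g' i = t - c),
            ((t.factorial : ℝ) / ((c.factorial : ℝ) * ∏ i ∈ τ', ((g' i).factorial : ℝ))) *
              (risingFac (x a) c * ∏ i ∈ τ', risingFac (x i) (g' i)) := by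
        refine Finset.sum_bij' (fun g _ => Function.update g a 0)
          (fun g' _ => Function.update g' a c) ?_ ?_ ?_ ?_ ?_
        · intro g hg
          simp only [Finset.mem_filter, Fintype.mem_piFinset, Finset.mem_range] at hg ⊢
          obtain ⟨⟨hpi, hsupp, hsum⟩, hga⟩ := hg
          rw [Finset.sum_insert ha] at hsum
          refine ⟨fun i => ?_, fun i hi => ?_, ?_⟩
          · rcases eq_or_ne i a with rfl | hne
            · simp
            · rw [Function.update_of_ne hne]; exact hpi i
          · rcases eq_or_ne i a with rfl | hne
            · simp
            · rw [Function.update_of_ne hne]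
              exact hsupp i (by simp [hne, hi])
          · have hsum' : ∑ i ∈ τ', Function.update g a 0 i = ∑ i ∈ τ', g i := by
              refine Finset.sum_congr rfl fun i hi => ?_
              exact Function.update_of_ne (by rintro rfl; exact ha hi) _ _
            rw [hsum']
            omega
        · intro g' hg'
          simp only [Finset.mem_filter, Fintype.mem_piFinset, Finset.mem_range] at hg' ⊢
          obtain ⟨hpi, hsupp, hsum⟩ := hg'
          refine ⟨⟨fun i => ?_, fun i hi => ?_, ?_⟩, by simp⟩
          · rcases eq_or_ne i a with rfl | hne
            · simp; omega
            · rw [Function.update_of_ne hne]; exact hpi i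
          · rw [Finset.mem_insert, not_or] at hi
            rw [Function.update_of_ne hi.1]
            exact hsupp i hi.2
          · have hsum' : ∑ i ∈ τ', Function.update g' a c i = ∑ i ∈ τ', g' i := by
              refine Finset.sum_congr rfl fun i hi => ?_
              exact Function.update_of_ne (by rintro rfl; exact ha hi) _ _
            rw [Finset.sum_insert ha, Function.update_self, hsum', hsum]
            omega
        · intro g hg
          simp only [Finset.mem_filter] at hg
          funext i
          rcases eq_or_ne i a with rfl | hne
          · simp [hg.2]
          · simp [Function.update_of_ne hne]
        · intro g' hg'
          simp only [Finset.mem_filter] at hg'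
          funext i
          rcases eq_or_ne i a with rfl | hne
          · simp [hg'.2.1 i ha]
          · simp [Function.update_of_ne hne]
        · intro g hg
          simp only [Finset.mem_filter] at hg
          have hga : g a = c := hg.2
          have hprod1 : ∏ i ∈ insert a τ', ((g i).factorial : ℝ)
              = (c.factorial : ℝ) * ∏ i ∈ τ', (((Function.update g a 0) i).factorial : ℝ) := by
            rw [Finset.prod_insert ha, hga]
            congr 1
            exact Finset.prod_congr rfl fun i hi => by
              rw [Function.update_of_ne (by rintro rfl; exact ha hi)]
          have hprod2 : ∏ i ∈ insert a τ', risingFac (x i) (g i)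
              = risingFac (x a) c * ∏ i ∈ τ', risingFac (x i) ((Function.update g a 0) i) := by
            rw [Finset.prod_insert ha, hga]
            congr 1
            exact Finset.prod_congr rfl fun i hi => by
              rw [Function.update_of_ne (by rintro rfl; exact ha hi)]
          rw [hprod1, hprod2]
      rw [step1]
      have step2 : ∀ g' ∈ (Fintype.piFinset fun _ : ι => Finset.range (M+1)).filter
              (fun g' => (∀ i ∉ τ', g' i = 0) ∧ ∑ i ∈ τ', g' i = t - c),
          ((t.factorial : ℝ) / ((c.factorial : ℝ) * ∏ i ∈ τ', ((g' i).factorial : ℝ))) *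
              (risingFac (x a) c * ∏ i ∈ τ', risingFac (x i) (g' i))
          = ((t.choose c : ℝ) * risingFac (x a) c) *
              ((((t-c).factorial : ℝ) / ∏ i ∈ τ', ((g' i).factorial : ℝ)) *
                ∏ i ∈ τ', risingFac (x i) (g' i)) := by
        intro g' _
        have hP : (∏ i ∈ τ', ((g' i).factorial : ℝ)) ≠ 0 :=
          Finset.prod_ne_zero_iff.mpr fun i _ => Nat.cast_ne_zero.mpr (Nat.factorial_ne_zero _)
        have hfac : (t.factorial : ℝ) = (t.choose c : ℝ) * c.factorial * (t-c).factorial := by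
          rw [← Nat.choose_mul_factorial_mul_factorial hc]
          push_cast; ring
        rw [hfac]
        field_simp
      rw [Finset.sum_congr rfl step2, ← Finset.mul_sum, ih (t - c) (by omega)]
      ring
    rw [Finset.sum_congr rfl inner, Finset.sum_insert ha, risingFac_add]

lemma genStirling_eq_zero {α : ℝ} {s k : ℕ} (h : s < k) : genStirling α s k = 0 := by
  have hemp : compositions s k = ∅ := by
    rw [Finset.eq_empty_iff_forall_notMem]
    intro f hf
    rw [compositions, Finset.mem_filter] at hf
    obtain ⟨-, hpos, hsum⟩ := hf
    have hk : k ≤ ∑ i, f i := by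
      calc k = ∑ _i : Fin k, 1 := by simp
      _ ≤ ∑ i, f i := Finset.sum_le_sum fun i _ => hpos i
    omega
  simp [genStirling, hemp]

lemma key_per_k {ι : Type*} [Fintype ι] [DecidableEq ι] (α : ℝ) (x : ι → ℝ)
    (τ : Finset ι) (M k : ℕ) :
    ∑ g ∈ (Fintype.piFinset fun _ : ι => Finset.range (M+1)).filter
        (fun g => (∀ i ∉ τ, g i = 0) ∧ ∑ i ∈ τ, g i ≤ M),
      ((M.factorial : ℝ) /
          ((∏ i ∈ τ, ((g i).factorial : ℝ)) * (((M - ∑ i ∈ τ, g i).factorial : ℕ) : ℝ))) *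
        (∏ i ∈ τ, risingFac (x i) (g i)) * genStirling α (M - ∑ i ∈ τ, g i) k
    = genStirlingNC α (-(∑ i ∈ τ, x i)) M k := by
  have hmaps : ∀ g ∈ (Fintype.piFinset fun _ : ι => Finset.range (M+1)).filter
      (fun g => (∀ i ∉ τ, g i = 0) ∧ ∑ i ∈ τ, g i ≤ M),
      (∑ i ∈ τ, g i) ∈ Finset.range (M+1) := by
    intro g hg
    rw [Finset.mem_filter] at hg
    exact Finset.mem_range.mpr (by omega)
  rw [← Finset.sum_fiberwise_of_maps_to hmaps]
  have inner : ∀ t ∈ Finset.range (M+1),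
      ∑ g ∈ ((Fintype.piFinset fun _ : ι => Finset.range (M+1)).filter
          (fun g => (∀ i ∉ τ, g i = 0) ∧ ∑ i ∈ τ, g i ≤ M)).filter
          (fun g => ∑ i ∈ τ, g i = t),
        ((M.factorial : ℝ) /
            ((∏ i ∈ τ, ((g i).factorial : ℝ)) * (((M - ∑ i ∈ τ, g i).factorial : ℕ) : ℝ))) *
          (∏ i ∈ τ, risingFac (x i) (g i)) * genStirling α (M - ∑ i ∈ τ, g i) k
      = (M.choose t : ℝ) * risingFac (∑ i ∈ τ, x i) t * genStirling α (M - t) k := by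
    intro t htmem
    rw [Finset.mem_range, Nat.lt_succ_iff] at htmem
    have hset : ((Fintype.piFinset fun _ : ι => Finset.range (M+1)).filter
          (fun g => (∀ i ∉ τ, g i = 0) ∧ ∑ i ∈ τ, g i ≤ M)).filter
          (fun g => ∑ i ∈ τ, g i = t)
        = (Fintype.piFinset fun _ : ι => Finset.range (M+1)).filter
          (fun g => (∀ i ∉ τ, g i = 0) ∧ ∑ i ∈ τ, g i = t) := by
      rw [Finset.filter_filter]
      refine Finset.filter_congr fun g _ => ?_
      constructor
      · rintro ⟨⟨h1, -⟩, h3⟩; exact ⟨h1, h3⟩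
      · rintro ⟨h1, h3⟩; exact ⟨⟨h1, by omega⟩, h3⟩
    rw [hset]
    have hterm : ∀ g ∈ (Fintype.piFinset fun _ : ι => Finset.range (M+1)).filter
        (fun g => (∀ i ∉ τ, g i = 0) ∧ ∑ i ∈ τ, g i = t),
        ((M.factorial : ℝ) /
            ((∏ i ∈ τ, ((g i).factorial : ℝ)) * (((M - ∑ i ∈ τ, g i).factorial : ℕ) : ℝ))) *
          (∏ i ∈ τ, risingFac (x i) (g i)) * genStirling α (M - ∑ i ∈ τ, g i) k
        = ((M.choose t : ℝ) * genStirling α (M - t) k) *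
            (((t.factorial : ℝ) / ∏ i ∈ τ, ((g i).factorial : ℝ)) *
              ∏ i ∈ τ, risingFac (x i) (g i)) := by
      intro g hg
      rw [Finset.mem_filter] at hg
      have hsum : ∑ i ∈ τ, g i = t := hg.2.2
      rw [hsum]
      have hP : (∏ i ∈ τ, ((g i).factorial : ℝ)) ≠ 0 :=
        Finset.prod_ne_zero_iff.mpr fun i _ => Nat.cast_ne_zero.mpr (Nat.factorial_ne_zero _)
      have hQ : (((M - t).factorial : ℕ) : ℝ) ≠ 0 := Nat.cast_ne_zero.mpr (Nat.factorial_ne_zero _)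
      have hfac : (M.factorial : ℝ) = (M.choose t : ℝ) * t.factorial * (M - t).factorial := by
        rw [← Nat.choose_mul_factorial_mul_factorial htmem]
        push_cast; ring
      rw [hfac]
      field_simp
    rw [Finset.sum_congr rfl hterm, ← Finset.mul_sum,
      multinomial_risingFac x M τ t htmem]
    ring
  rw [Finset.sum_congr rfl inner]
  have hreflect := Finset.sum_range_reflect
    (fun t => (M.choose t : ℝ) * risingFac (∑ i ∈ τ, x i) t * genStirling α (M - t) k) (M+1)
  rw [← hreflect]
  rw [genStirlingNC, neg_neg]
  have hsub : Finset.Icc k M ⊆ Finset.range (M+1) := fun s hs => by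
    rw [Finset.mem_Icc] at hs; exact Finset.mem_range.mpr (by omega)
  have hext : ∑ s ∈ Finset.Icc k M,
        (M.choose s : ℝ) * genStirling α s k * risingFac (∑ i ∈ τ, x i) (M - s)
      = ∑ s ∈ Finset.range (M+1),
        (M.choose s : ℝ) * genStirling α s k * risingFac (∑ i ∈ τ, x i) (M - s) := by
    refine Finset.sum_subset hsub fun s hs hns => ?_
    rw [Finset.mem_range, Nat.lt_succ_iff] at hs
    rw [Finset.mem_Icc] at hns
    rw [genStirling_eq_zero (by omega : s < k)]
    ring
  rw [hext]
  refine Finset.sum_congr rfl fun s hs => ?_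
  rw [Finset.mem_range, Nat.lt_succ_iff] at hs
  have h1 : M + 1 - 1 - s = M - s := by omega
  have h2 : M - (M - s) = s := by omega
  rw [h1, h2, Nat.choose_symm hs]
  ring

lemma key_sum {ι : Type*} [Fintype ι] [DecidableEq ι] (α : ℝ) (x : ι → ℝ)
    (τ : Finset ι) (M : ℕ) (W : ℕ → ℝ) :
    ∑ g ∈ (Fintype.piFinset fun _ : ι => Finset.range (M+1)).filter
        (fun g => (∀ i ∉ τ, g i = 0) ∧ ∑ i ∈ τ, g i ≤ M),
      ((M.factorial : ℝ) /
          ((∏ i ∈ τ, ((g i).factorial : ℝ)) * (((M - ∑ i ∈ τ, g i).factorial : ℕ) : ℝ))) *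
        (∏ i ∈ τ, risingFac (x i) (g i)) *
        ∑ k ∈ Finset.range (M - ∑ i ∈ τ, g i + 1), W k * genStirling α (M - ∑ i ∈ τ, g i) k
    = ∑ k ∈ Finset.range (M+1), W k * genStirlingNC α (-(∑ i ∈ τ, x i)) M k := by
  have step1 : ∀ g ∈ (Fintype.piFinset fun _ : ι => Finset.range (M+1)).filter
      (fun g => (∀ i ∉ τ, g i = 0) ∧ ∑ i ∈ τ, g i ≤ M),
      ((M.factorial : ℝ) /
          ((∏ i ∈ τ, ((g i).factorial : ℝ)) * (((M - ∑ i ∈ τ, g i).factorial : ℕ) : ℝ))) *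
        (∏ i ∈ τ, risingFac (x i) (g i)) *
        ∑ k ∈ Finset.range (M - ∑ i ∈ τ, g i + 1), W k * genStirling α (M - ∑ i ∈ τ, g i) k
      = ∑ k ∈ Finset.range (M+1),
          W k * (((M.factorial : ℝ) /
            ((∏ i ∈ τ, ((g i).factorial : ℝ)) * (((M - ∑ i ∈ τ, g i).factorial : ℕ) : ℝ))) *
          (∏ i ∈ τ, risingFac (x i) (g i)) * genStirling α (M - ∑ i ∈ τ, g i) k) := by
    intro g hg
    have hsub : Finset.range (M - ∑ i ∈ τ, g i + 1) ⊆ Finset.range (M+1) := by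
      apply Finset.range_subset_range.mpr; omega
    have hext : ∑ k ∈ Finset.range (M - ∑ i ∈ τ, g i + 1),
          W k * genStirling α (M - ∑ i ∈ τ, g i) k
        = ∑ k ∈ Finset.range (M+1), W k * genStirling α (M - ∑ i ∈ τ, g i) k := by
      refine Finset.sum_subset hsub fun k hk hnk => ?_
      rw [Finset.mem_range] at hk hnk
      rw [genStirling_eq_zero (by omega : M - ∑ i ∈ τ, g i < k)]
      ring
    rw [hext, Finset.mul_sum]
    refine Finset.sum_congr rfl fun k _ => by ring
  rw [Finset.sum_congr rfl step1, Finset.sum_comm]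
  refine Finset.sum_congr rfl fun k _ => ?_
  rw [← Finset.mul_sum, key_per_k α x τ M k]

set_option maxHeartbeats 2000000 in
lemma innerSum (n j m : ℕ) (nv : Fin j → ℕ) (hsum : ∑ i, nv i = n)
    (α : ℝ) (V : ℕ → ℕ → ℝ) (l r : ℕ) (ξ : Finset (Fin j)) (hcard : ξ.card = r) :
    ∑ mv ∈ ((Fintype.piFinset fun _ : Fin j => Finset.range (m + 1)).filter
        (fun mv => ∑ i, mv i ≤ m)).filter (fun mv => ∀ i ∈ ξ, nv i + mv i = l),
      oldJoint α V n j m nv mv (m - ∑ i, mv i)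
    = if (∀ i ∈ ξ, nv i ≤ l) ∧ (∑ i ∈ ξ, (l - nv i)) ≤ m then
        (Nat.factorial m : ℝ) * (∏ i ∈ ξ, risingFac ((nv i : ℝ) - α) (l - nv i)) /
            ((∏ i ∈ ξ, (Nat.factorial (l - nv i) : ℝ)) *
              (Nat.factorial (m + (∑ i ∈ ξ, nv i) - r * l) : ℝ)) *
          ∑ k ∈ Finset.range (m + (∑ i ∈ ξ, nv i) - r * l + 1),
            (V (n + m) (j + k) / V n j) *
              genStirlingNC α
                (-((n : ℝ) - ((j : ℝ) - r) * α - ∑ i ∈ ξ, (nv i : ℝ)))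
                (m + (∑ i ∈ ξ, nv i) - r * l) k
      else 0 := by
  by_cases hGood : (∀ i ∈ ξ, nv i ≤ l) ∧ (∑ i ∈ ξ, (l - nv i)) ≤ m
  swap
  · rw [if_neg hGood]
    refine Finset.sum_eq_zero fun mv hmv => absurd ?_ hGood
    simp only [Finset.mem_filter, Fintype.mem_piFinset, Finset.mem_range] at hmv
    obtain ⟨⟨-, hA2⟩, hcond⟩ := hmv
    have h1 : ∀ i ∈ ξ, mv i = l - nv i ∧ nv i ≤ l := fun i hi => by
      have := hcond i hi; omega
    have h2 : ∑ i ∈ ξ, (l - nv i) = ∑ i ∈ ξ, mv i :=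
      Finset.sum_congr rfl fun i hi => ((h1 i hi).1).symm
    have h3 : ∑ i ∈ ξ, mv i ≤ ∑ i, mv i :=
      Finset.sum_le_sum_of_subset (Finset.subset_univ ξ)
    exact ⟨fun i hi => (h1 i hi).2, by omega⟩
  · rw [if_pos hGood]
    obtain ⟨hnl, hDm⟩ := hGood
    set D := ∑ i ∈ ξ, (l - nv i) with hD
    set M := m - D with hMdef
    set T := ∑ i ∈ ξ, nv i with hT
    have hDT : D + T = r * l := by
      rw [hD, hT, ← Finset.sum_add_distrib]
      have : ∀ i ∈ ξ, (l - nv i) + nv i = l := fun i hi => by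
        have := hnl i hi; omega
      rw [Finset.sum_congr rfl this, Finset.sum_const, smul_eq_mul, hcard, Nat.mul_comm]
    have hMT : m + T - r * l = M := by omega
    rw [hMT]
    -- reindex the sum
    have hbij : ∑ mv ∈ ((Fintype.piFinset fun _ : Fin j => Finset.range (m + 1)).filter
          (fun mv => ∑ i, mv i ≤ m)).filter (fun mv => ∀ i ∈ ξ, nv i + mv i = l),
        oldJoint α V n j m nv mv (m - ∑ i, mv i)
        = ∑ g ∈ (Fintype.piFinset fun _ : Fin j => Finset.range (M+1)).filter
            (fun g => (∀ i ∉ ξᶜ, g i = 0) ∧ ∑ i ∈ ξᶜ, g i ≤ M),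
          ((Nat.factorial m : ℝ) * (∏ i ∈ ξ, risingFac ((nv i : ℝ) - α) (l - nv i)) /
              ((∏ i ∈ ξ, (Nat.factorial (l - nv i) : ℝ)) * (Nat.factorial M : ℝ))) *
            (((M.factorial : ℝ) /
                ((∏ i ∈ ξᶜ, ((g i).factorial : ℝ)) * (((M - ∑ i ∈ ξᶜ, g i).factorial : ℕ) : ℝ))) *
              (∏ i ∈ ξᶜ, risingFac ((nv i : ℝ) - α) (g i)) *
              ∑ k ∈ Finset.range (M - ∑ i ∈ ξᶜ, g i + 1),
                (V (n + m) (j + k) / V n j) * genStirling α (M - ∑ i ∈ ξᶜ, g i) k) := by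
      refine Finset.sum_bij' (fun mv _ => fun i => if i ∈ ξ then 0 else mv i)
        (fun g _ => fun i => if i ∈ ξ then l - nv i else g i) ?_ ?_ ?_ ?_ ?_
      · -- forward membership
        intro mv hmv
        simp only [Finset.mem_filter, Fintype.mem_piFinset, Finset.mem_range] at hmv ⊢
        obtain ⟨⟨hA1, hA2⟩, hcond⟩ := hmv
        have hmveq : ∀ i ∈ ξ, mv i = l - nv i := fun i hi => by
          have := hcond i hi; omega
        have hsplit : ∑ i ∈ ξ, mv i + ∑ i ∈ ξᶜ, mv i = ∑ i, mv i :=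
          Finset.sum_add_sum_compl ξ mv
        have hDs : ∑ i ∈ ξ, mv i = D := Finset.sum_congr rfl hmveq
        have hrest : ∑ i ∈ ξᶜ, mv i ≤ M := by omega
        refine ⟨fun i => ?_, fun i hi => ?_, ?_⟩
        · by_cases hiξ : i ∈ ξ
          · simp [hiξ]
          · simp only [hiξ, if_false]
            have : mv i ≤ ∑ i' ∈ ξᶜ, mv i' :=
              Finset.single_le_sum (fun i' _ => Nat.zero_le _) (Finset.mem_compl.mpr hiξ)
            omega
        · rw [Finset.mem_compl, not_not] at hi
          simp [hi]
        · calc ∑ i ∈ ξᶜ, (if i ∈ ξ then 0 else mv i) = ∑ i ∈ ξᶜ, mv i := by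
                refine Finset.sum_congr rfl fun i hi => ?_
                rw [Finset.mem_compl] at hi
                simp [hi]
          _ ≤ M := hrest
      · -- backward membership
        intro g hg
        simp only [Finset.mem_filter, Fintype.mem_piFinset, Finset.mem_range] at hg ⊢
        obtain ⟨hg1, hg2, hg3⟩ := hg
        refine ⟨⟨fun i => ?_, ?_⟩, fun i hi => ?_⟩
        · by_cases hiξ : i ∈ ξ
          · simp only [hiξ, if_true]
            have : l - nv i ≤ D :=
              Finset.single_le_sum (f := fun i' => l - nv i') (fun i' _ => Nat.zero_le _) hiξ
            omega
          · simp only [hiξ, if_false]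
            have := hg1 i
            omega
        · have e1 : ∑ i ∈ ξ, (if i ∈ ξ then l - nv i else g i) = D :=
            Finset.sum_congr rfl fun i hi => by simp [hi]
          have e2 : ∑ i ∈ ξᶜ, (if i ∈ ξ then l - nv i else g i) = ∑ i ∈ ξᶜ, g i :=
            Finset.sum_congr rfl fun i hi => by
              rw [Finset.mem_compl] at hi; simp [hi]
          have hsplit := Finset.sum_add_sum_compl ξ (fun i => if i ∈ ξ then l - nv i else g i)
          rw [e1, e2] at hsplit
          omega
        · simp only [hi, if_true]
          have := hnl i hi
          omega
      · -- left inverse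
        intro mv hmv
        simp only [Finset.mem_filter] at hmv
        funext i
        by_cases hiξ : i ∈ ξ
        · simp only [hiξ, if_true]
          have := hmv.2 i hiξ
          omega
        · simp [hiξ]
      · -- right inverse
        intro g hg
        simp only [Finset.mem_filter] at hg
        funext i
        by_cases hiξ : i ∈ ξ
        · simp only [hiξ, if_true]
          exact (hg.2.1 i (by simp [hiξ])).symm
        · simp [hiξ]
      · -- values
        intro mv hmv
        simp only [Finset.mem_filter, Fintype.mem_piFinset, Finset.mem_range] at hmv
        obtain ⟨⟨hA1, hA2⟩, hcond⟩ := hmv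
        have hmveq : ∀ i ∈ ξ, mv i = l - nv i := fun i hi => by
          have := hcond i hi; omega
        have hDs : ∑ i ∈ ξ, mv i = D := Finset.sum_congr rfl hmveq
        have hsplit : ∑ i ∈ ξ, mv i + ∑ i ∈ ξᶜ, mv i = ∑ i, mv i :=
          Finset.sum_add_sum_compl ξ mv
        have hgsum : ∑ i ∈ ξᶜ, (if i ∈ ξ then 0 else mv i) = ∑ i ∈ ξᶜ, mv i :=
          Finset.sum_congr rfl fun i hi => by
            rw [Finset.mem_compl] at hi; simp [hi]
        have hs : m - ∑ i, mv i = M - ∑ i ∈ ξᶜ, (if i ∈ ξ then 0 else mv i) := by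
          rw [hgsum]; omega
        have hpfac : ∏ i, ((mv i).factorial : ℝ)
            = (∏ i ∈ ξ, ((l - nv i).factorial : ℝ)) *
              ∏ i ∈ ξᶜ, (((if i ∈ ξ then 0 else mv i)).factorial : ℝ) := by
          rw [← Finset.prod_mul_prod_compl ξ]
          congr 1
          · exact Finset.prod_congr rfl fun i hi => by rw [hmveq i hi]
          · exact Finset.prod_congr rfl fun i hi => by
              rw [Finset.mem_compl] at hi; simp [hi]
        have hprf : ∏ i, risingFac ((nv i : ℝ) - α) (mv i)
            = (∏ i ∈ ξ, risingFac ((nv i : ℝ) - α) (l - nv i)) *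
              ∏ i ∈ ξᶜ, risingFac ((nv i : ℝ) - α) (if i ∈ ξ then 0 else mv i) := by
          rw [← Finset.prod_mul_prod_compl ξ]
          congr 1
          · exact Finset.prod_congr rfl fun i hi => by rw [hmveq i hi]
          · exact Finset.prod_congr rfl fun i hi => by
              rw [Finset.mem_compl] at hi; simp [hi]
        rw [oldJoint, hs, hpfac, hprf]
        have hP1 : (∏ i ∈ ξ, ((l - nv i).factorial : ℝ)) ≠ 0 :=
          Finset.prod_ne_zero_iff.mpr fun i _ => Nat.cast_ne_zero.mpr (Nat.factorial_ne_zero _)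
        have hQ : (∏ i ∈ ξᶜ, (((if i ∈ ξ then 0 else mv i)).factorial : ℝ)) ≠ 0 :=
          Finset.prod_ne_zero_iff.mpr fun i _ => Nat.cast_ne_zero.mpr (Nat.factorial_ne_zero _)
        have hMfac : ((M.factorial : ℕ) : ℝ) ≠ 0 := Nat.cast_ne_zero.mpr (Nat.factorial_ne_zero _)
        have hRfac : (((M - ∑ i ∈ ξᶜ, (if i ∈ ξ then 0 else mv i)).factorial : ℕ) : ℝ) ≠ 0 :=
          Nat.cast_ne_zero.mpr (Nat.factorial_ne_zero _)
        field_simp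
    rw [hbij, ← Finset.mul_sum]
    have hrj : r ≤ j := by
      rw [← hcard]
      simpa using Finset.card_le_card (Finset.subset_univ ξ)
    have hccard : (ξᶜ.card : ℝ) = (j : ℝ) - r := by
      rw [Finset.card_compl, hcard, Fintype.card_fin, Nat.cast_sub hrj]
    have hnvsplit : (∑ i ∈ ξ, (nv i : ℝ)) + ∑ i ∈ ξᶜ, (nv i : ℝ) = (n : ℝ) := by
      rw [Finset.sum_add_sum_compl ξ (fun i => (nv i : ℝ))]
      rw [← Nat.cast_sum, hsum]
    have hγ : -∑ i ∈ ξᶜ, ((nv i : ℝ) - α)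
        = -((n : ℝ) - ((j : ℝ) - r) * α - ∑ i ∈ ξ, (nv i : ℝ)) := by
      rw [Finset.sum_sub_distrib, Finset.sum_const, nsmul_eq_mul, hccard]
      have h5 : ∑ i ∈ ξᶜ, (nv i : ℝ) = (n : ℝ) - ∑ i ∈ ξ, (nv i : ℝ) := by linarith
      rw [h5]
      ring
    have hks := key_sum α (fun i => (nv i : ℝ) - α) ξᶜ M (fun k => V (n + m) (j + k) / V n j)
    rw [hγ] at hks
    congr 1
    beta_reduce
    convert hks using 2
    all_goals (ext g; simp only [Finset.mem_filter])


end AuxProofs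

/-- The `r`-th falling factorial moment of the number of old blocks of size `l`. -/
theorem oldJoint_fallingFactorial_moment (n j m : ℕ) (hn : 1 ≤ n) (hj : 1 ≤ j)
    (hm : 1 ≤ m) (hjn : j ≤ n)
    (nv : Fin j → ℕ) (hnv : ∀ i, 0 < nv i) (hsum : ∑ i, nv i = n)
    (α : ℝ) (hα : α < 1) (V : ℕ → ℕ → ℝ) (hV : V n j ≠ 0)
    (l r : ℕ) (hl : 1 ≤ l) (hln : l ≤ n + m) (hr : 1 ≤ r) :
    ∑ mv ∈ (Fintype.piFinset fun _ : Fin j => Finset.range (m + 1)).filter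
        (fun mv => ∑ i, mv i ≤ m),
        fallingFac (((Finset.univ.filter fun i => nv i + mv i = l).card : ℕ) : ℝ) r *
          oldJoint α V n j m nv mv (m - ∑ i, mv i) =
      (Nat.factorial r : ℝ) *
        ∑ ξ ∈ (Finset.powersetCard r (Finset.univ : Finset (Fin j))).filter
            (fun ξ => (∀ i ∈ ξ, nv i ≤ l) ∧ (∑ i ∈ ξ, (l - nv i)) ≤ m),
          (Nat.factorial m : ℝ) * (∏ i ∈ ξ, risingFac ((nv i : ℝ) - α) (l - nv i)) /
              ((∏ i ∈ ξ, (Nat.factorial (l - nv i) : ℝ)) *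
                (Nat.factorial (m + (∑ i ∈ ξ, nv i) - r * l) : ℝ)) *
            ∑ k ∈ Finset.range (m + (∑ i ∈ ξ, nv i) - r * l + 1),
              (V (n + m) (j + k) / V n j) *
                genStirlingNC α
                  (-((n : ℝ) - ((j : ℝ) - r) * α - ∑ i ∈ ξ, (nv i : ℝ)))
                  (m + (∑ i ∈ ξ, nv i) - r * l) k := by
  have hpt : ∀ mv ∈ (Fintype.piFinset fun _ : Fin j => Finset.range (m + 1)).filter
      (fun mv => ∑ i, mv i ≤ m),
      fallingFac (((Finset.univ.filter fun i => nv i + mv i = l).card : ℕ) : ℝ) r *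
          oldJoint α V n j m nv mv (m - ∑ i, mv i)
      = ∑ ξ ∈ Finset.powersetCard r (Finset.univ : Finset (Fin j)),
          (Nat.factorial r : ℝ) *
            (if ∀ i ∈ ξ, nv i + mv i = l then oldJoint α V n j m nv mv (m - ∑ i, mv i) else 0) := by
    intro mv _
    have h2 : Finset.powersetCard r (Finset.univ.filter fun i => nv i + mv i = l)
        = (Finset.powersetCard r (Finset.univ : Finset (Fin j))).filter
            (fun ξ => ∀ i ∈ ξ, nv i + mv i = l) := by
      ext ξ
      simp only [Finset.mem_powersetCard, Finset.mem_filter, Finset.subset_iff,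
        Finset.mem_filter, Finset.mem_univ, true_and]
      tauto
    have h1 : fallingFac (((Finset.univ.filter fun i => nv i + mv i = l).card : ℕ) : ℝ) r
        = (Nat.factorial r : ℝ) *
          (((Finset.powersetCard r (Finset.univ : Finset (Fin j))).filter
            (fun ξ => ∀ i ∈ ξ, nv i + mv i = l)).card : ℝ) := by
      rw [fallingFac_natCast, Nat.descFactorial_eq_factorial_mul_choose,
        ← Finset.card_powersetCard, h2]
      push_cast; ring
    rw [h1, Finset.card_filter]
    push_cast
    rw [mul_assoc, Finset.sum_mul, Finset.mul_sum]
    refine Finset.sum_congr rfl fun ξ _ => ?_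
    split_ifs <;> simp
  rw [Finset.sum_congr rfl hpt, Finset.sum_comm]
  have hξ : ∀ ξ ∈ Finset.powersetCard r (Finset.univ : Finset (Fin j)),
      ∑ mv ∈ (Fintype.piFinset fun _ : Fin j => Finset.range (m + 1)).filter
        (fun mv => ∑ i, mv i ≤ m),
        (Nat.factorial r : ℝ) *
          (if ∀ i ∈ ξ, nv i + mv i = l then oldJoint α V n j m nv mv (m - ∑ i, mv i) else 0)
      = (Nat.factorial r : ℝ) *
          (if (∀ i ∈ ξ, nv i ≤ l) ∧ (∑ i ∈ ξ, (l - nv i)) ≤ m then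
            (Nat.factorial m : ℝ) * (∏ i ∈ ξ, risingFac ((nv i : ℝ) - α) (l - nv i)) /
                ((∏ i ∈ ξ, (Nat.factorial (l - nv i) : ℝ)) *
                  (Nat.factorial (m + (∑ i ∈ ξ, nv i) - r * l) : ℝ)) *
              ∑ k ∈ Finset.range (m + (∑ i ∈ ξ, nv i) - r * l + 1),
                (V (n + m) (j + k) / V n j) *
                  genStirlingNC α
                    (-((n : ℝ) - ((j : ℝ) - r) * α - ∑ i ∈ ξ, (nv i : ℝ)))
                    (m + (∑ i ∈ ξ, nv i) - r * l) k
          else 0) := by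
    intro ξ hξmem
    rw [Finset.mem_powersetCard] at hξmem
    rw [← Finset.mul_sum, ← Finset.sum_filter,
      innerSum n j m nv hsum α V l r ξ hξmem.2]
  rw [Finset.sum_congr rfl hξ, ← Finset.mul_sum, ← Finset.sum_filter]
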